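/- For every i with 1 ≤ i ≤ n, the Dickson invariant d_{n,n-i} has the expansion d_{n,n-i} = ∑_{1 ≤ j_1 < j_2 < ⋯ < j_i ≤ n} ∏_{s=1}^{i} h_{j_s}^{p^{n-i+s-j_s}} in S, where the sum runs over all strictly increasing sequences 1 ≤ j_1 < ⋯ < j_i ≤ n. -/

import Mathlib

open MvPolynomial

/-- `V p n k` : the set of `𝔽_p`-linear combinations of the first `k` variables. -/
noncomputable def V (p n k : ℕ) [Fact p.Prime] : Finset (MvPolynomial (Fin n) (ZMod p)) :=
  (Finset.univ : Finset (Fin n → ZMod p)).image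
    (fun c => ∑ j ∈ Finset.univ.filter (fun j : Fin n => j.val < k), C (c j) * X j)

/-- `f p n k = ∏_{u ∈ V_k} (X - C u)`. -/
noncomputable def f (p n k : ℕ) [Fact p.Prime] :
    Polynomial (MvPolynomial (Fin n) (ZMod p)) :=
  ∏ u ∈ V p n k, (Polynomial.X - Polynomial.C u)

/-- Dickson invariant `d_{k,i}`. -/
noncomputable def d (p n k i : ℕ) [Fact p.Prime] : MvPolynomial (Fin n) (ZMod p) :=
  (-1) ^ (k - i) * (f p n k).coeff (p ^ i)

/-- Borel generator: `hGen p n j` is `h_{j+1}` of the paper. -/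
noncomputable def hGen (p n : ℕ) [Fact p.Prime] (j : Fin n) : MvPolynomial (Fin n) (ZMod p) :=
  (Polynomial.eval (X j) (f p n j.val)) ^ (p - 1)

/-- Action of `GL_n(𝔽_p)` on `S` by linear substitution `g · y_j = ∑_i g_{ij} y_i`. -/
noncomputable def gact (p n : ℕ) [Fact p.Prime] (g : GL (Fin n) (ZMod p)) :
    MvPolynomial (Fin n) (ZMod p) →ₐ[ZMod p] MvPolynomial (Fin n) (ZMod p) :=
  aeval (fun j : Fin n => ∑ i : Fin n, C ((g : Matrix (Fin n) (Fin n) (ZMod p)) i j) * X i)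
namespace Stmt9Aux

variable (p n : ℕ) [Fact p.Prime]

local notation "K" => ZMod p
local notation "S" => MvPolynomial (Fin n) (ZMod p)

/-- The linear-combination map. -/
noncomputable def L (k : ℕ) (c : Fin n → K) : S :=
  ∑ j ∈ Finset.univ.filter (fun j : Fin n => j.val < k), C (c j) * X j

lemma mem_V_iff {k : ℕ} {u : S} : u ∈ V p n k ↔ ∃ c : Fin n → K, L p n k c = u := by
  simp [V, L, eq_comm]

lemma L_add (k : ℕ) (c c' : Fin n → K) : L p n k (c + c') = L p n k c + L p n k c' := by
  simp [L, Finset.sum_add_distrib, add_mul, map_add]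

lemma L_sub (k : ℕ) (c c' : Fin n → K) : L p n k (c - c') = L p n k c - L p n k c' := by
  simp [L, Finset.sum_sub_distrib, sub_mul, map_sub]

lemma L_smul (k : ℕ) (a : K) (c : Fin n → K) : L p n k (a • c) = a • L p n k c := by
  simp [L, Finset.smul_sum, smul_eq_C_mul, mul_assoc]

lemma zero_mem_V (k : ℕ) : (0 : S) ∈ V p n k := by
  rw [mem_V_iff]; exact ⟨0, by simp [L]⟩

lemma sub_mem_V {k : ℕ} {u v : S} (hu : u ∈ V p n k) (hv : v ∈ V p n k) : u - v ∈ V p n k := by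
  rw [mem_V_iff] at *
  obtain ⟨c, rfl⟩ := hu; obtain ⟨c', rfl⟩ := hv
  exact ⟨c - c', L_sub p n k c c'⟩

lemma coeff_L (k : ℕ) (c : Fin n → K) (j : Fin n) :
    MvPolynomial.coeff (Finsupp.single j 1) (L p n k c) = if j.val < k then c j else 0 := by
  rw [L, MvPolynomial.coeff_sum]
  have h1 : ∀ i : Fin n, MvPolynomial.coeff (Finsupp.single j 1) (C (c i) * X i)
      = if i = j then c i else 0 := by
    intro i
    rw [MvPolynomial.coeff_C_mul, MvPolynomial.coeff_X']
    by_cases h : i = j <;> simp [h, Finsupp.single_left_inj (one_ne_zero (α := ℕ))]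
  simp only [h1]
  rw [Finset.sum_ite_eq' (Finset.filter _ _) j (fun x => c x)]
  simp

end Stmt9Aux
namespace Stmt9Aux

variable (p n : ℕ) [Fact p.Prime]

local notation "K" => ZMod p
local notation "S" => MvPolynomial (Fin n) (ZMod p)

lemma card_V {k : ℕ} (hk : k ≤ n) : (V p n k).card = p ^ k := by
  have : (V p n k).card = Fintype.card (Fin k → K) := by
    apply Finset.card_nbij'
      (i := fun u (t : Fin k) => MvPolynomial.coeff (Finsupp.single (Fin.castLE hk t) 1) u)
      (j := fun c => L p n k (fun x => if h : x.val < k then c ⟨x.val, h⟩ else 0))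
    · intro u hu; exact Finset.mem_univ _
    · intro c _; rw [Finset.mem_coe, mem_V_iff]; exact ⟨_, rfl⟩
    · intro u hu
      rw [Finset.mem_coe, mem_V_iff p n] at hu
      obtain ⟨c, rfl⟩ := hu
      simp only [coeff_L]
      apply Finset.sum_congr rfl
      intro x hx
      simp only [Finset.mem_filter] at hx
      have h2 : (Fin.castLE hk ⟨x.val, hx.2⟩ : Fin n) = x := by ext; simp
      simp [hx.2, h2]
    · intro c _
      funext t
      have ht : (Fin.castLE hk t : Fin n).val < k := t.isLt
      simp only [coeff_L, if_pos ht, dif_pos ht]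
      exact congrArg c (Fin.ext rfl)
  rw [this]
  simp [ZMod.card]

end Stmt9Aux
namespace Stmt9Aux

variable (p n : ℕ) [Fact p.Prime]

local notation "K" => ZMod p
local notation "S" => MvPolynomial (Fin n) (ZMod p)

lemma f_monic (k : ℕ) : (f p n k).Monic :=
  Polynomial.monic_prod_of_monic _ _ fun u _ => Polynomial.monic_X_sub_C u

lemma f_natDegree (k : ℕ) : (f p n k).natDegree = (V p n k).card := by
  rw [f, Polynomial.natDegree_prod_of_monic _ _ (fun u _ => Polynomial.monic_X_sub_C u)]
  simp

lemma eval_f (k : ℕ) (w : S) :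
    Polynomial.eval w (f p n k) = ∏ u ∈ V p n k, (w - u) := by
  simp [f, Polynomial.eval_prod]

lemma eval_f_translate {k : ℕ} {v : S} (hv : v ∈ V p n k) (w : S) :
    Polynomial.eval (w + v) (f p n k) = Polynomial.eval w (f p n k) := by
  rw [eval_f, eval_f]
  apply Finset.prod_nbij' (i := fun u => u - v) (j := fun u => u + v)
  · intro u hu; exact sub_mem_V p n hu hv
  · intro u hu
    have h0 : (0:S) - v ∈ V p n k := sub_mem_V p n (zero_mem_V p n k) hv
    have := sub_mem_V p n hu h0
    simpa using this
  · intro u _; ring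
  · intro u _; ring
  · intro u _; ring

end Stmt9Aux
namespace Stmt9Aux

variable (p n : ℕ) [Fact p.Prime]

local notation "K" => ZMod p
local notation "S" => MvPolynomial (Fin n) (ZMod p)

lemma V_nonempty (k : ℕ) : (V p n k).Nonempty := ⟨0, zero_mem_V p n k⟩

lemma prod_translate (k : ℕ) (v : S) :
    ∏ u ∈ V p n k, (Polynomial.X - Polynomial.C (u + v)) =
      f p n k + Polynomial.C (Polynomial.eval (-v) (f p n k)) := by
  set P : Polynomial S := ∏ u ∈ V p n k, (Polynomial.X - Polynomial.C (u + v)) with hP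
  set e : S := Polynomial.eval (-v) (f p n k) with he
  have hPm : P.Monic := Polynomial.monic_prod_of_monic _ _ fun u _ => Polynomial.monic_X_sub_C _
  have hPd : P.natDegree = (V p n k).card := by
    rw [hP, Polynomial.natDegree_prod_of_monic _ _ (fun u _ => Polynomial.monic_X_sub_C _)]
    simp only [Polynomial.natDegree_X_sub_C, Finset.sum_const, smul_eq_mul, mul_one]
  set G : Polynomial S := P - f p n k - Polynomial.C e with hG
  have hcard : 0 < (V p n k).card := Finset.card_pos.mpr (V_nonempty p n k)
  have hdeg : G.natDegree < (V p n k).card := by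
    by_cases hG0 : G = 0
    · rw [hG0]; simpa using hcard
    rw [Polynomial.natDegree_lt_iff_degree_lt hG0]
    have h1 : (P - f p n k).degree < ((V p n k).card : ℕ) := by
      by_cases h0 : P - f p n k = 0
      · rw [h0]; exact lt_of_le_of_lt (by simp) (by exact_mod_cast Nat.cast_lt.mpr hcard)
      calc (P - f p n k).degree < P.degree := by
            apply Polynomial.degree_sub_lt
            · rw [Polynomial.degree_eq_natDegree hPm.ne_zero,
                Polynomial.degree_eq_natDegree (f_monic p n k).ne_zero, hPd, f_natDegree]
            · exact hPm.ne_zero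
            · rw [hPm.leadingCoeff, (f_monic p n k).leadingCoeff]
        _ = ((V p n k).card : ℕ) := by rw [Polynomial.degree_eq_natDegree hPm.ne_zero, hPd]
    have h2 : (Polynomial.C e).degree < ((V p n k).card : ℕ) :=
      lt_of_le_of_lt Polynomial.degree_C_le (by exact_mod_cast Nat.cast_lt.mpr hcard)
    calc G.degree ≤ max (P - f p n k).degree (Polynomial.C e).degree :=
          Polynomial.degree_sub_le _ _
      _ < ((V p n k).card : ℕ) := max_lt h1 h2
  have heval : ∀ u₀ ∈ V p n k, Polynomial.eval u₀ G = 0 := by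
    intro u₀ hu₀
    have h1 : Polynomial.eval u₀ P = e := by
      rw [hP]
      simp only [Polynomial.eval_prod, Polynomial.eval_sub, Polynomial.eval_X,
        Polynomial.eval_C]
      have : ∀ u ∈ V p n k, u₀ - (u + v) = (-v + u₀) - u := by intro u _; ring
      rw [Finset.prod_congr rfl this, ← eval_f, eval_f_translate p n hu₀, he]
    have h2 : Polynomial.eval u₀ (f p n k) = 0 := by
      rw [eval_f]
      exact Finset.prod_eq_zero hu₀ (by ring)
    simp [hG, h1, h2]
  have : G = 0 :=
    Polynomial.eq_zero_of_natDegree_lt_card_of_eval_eq_zero' G (V p n k) heval hdeg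
  have h3 : P - (f p n k + Polynomial.C e) = 0 := by rw [← sub_sub]; exact this
  exact sub_eq_zero.mp h3

end Stmt9Aux
namespace Stmt9Aux

variable (p n : ℕ) [Fact p.Prime]

local notation "K" => ZMod p
local notation "S" => MvPolynomial (Fin n) (ZMod p)

lemma eval_f_zero (k : ℕ) : Polynomial.eval 0 (f p n k) = 0 := by
  rw [eval_f]
  exact Finset.prod_eq_zero (zero_mem_V p n k) (by ring)

lemma eval_f_add (k : ℕ) (x y : S) :
    Polynomial.eval (x + y) (f p n k) =
      Polynomial.eval x (f p n k) + Polynomial.eval y (f p n k) := by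
  have h := congrArg (Polynomial.eval x) (prod_translate p n k (-y))
  simp only [Polynomial.eval_prod, Polynomial.eval_sub, Polynomial.eval_X,
    Polynomial.eval_C, Polynomial.eval_add, neg_neg] at h
  rw [eval_f p n k (x + y), ← h]
  apply Finset.prod_congr rfl; intro u _; ring
lemma eval_f_nsmul (k : ℕ) (m : ℕ) (y : S) :
    Polynomial.eval (m • y) (f p n k) = m • Polynomial.eval y (f p n k) := by
  induction m with
  | zero => simpa using eval_f_zero p n k
  | succ m ih => rw [succ_nsmul, succ_nsmul, eval_f_add, ih]

lemma eval_f_smul (k : ℕ) (a : K) (y : S) :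
    Polynomial.eval (a • y) (f p n k) = a • Polynomial.eval y (f p n k) := by
  have hp : NeZero p := ⟨(Fact.out : p.Prime).ne_zero⟩
  have h1 : a • y = (a.val : K) • y := by rw [ZMod.natCast_val, ZMod.cast_id]
  have h2 : a • Polynomial.eval y (f p n k) = (a.val : K) • Polynomial.eval y (f p n k) := by
    rw [ZMod.natCast_val, ZMod.cast_id]
  rw [h1, h2, Nat.cast_smul_eq_nsmul, Nat.cast_smul_eq_nsmul, eval_f_nsmul]

lemma eval_X_f_ne_zero (j : Fin n) : Polynomial.eval (X j) (f p n j.val) ≠ 0 := by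
  rw [eval_f]
  rw [Finset.prod_ne_zero_iff]
  intro u hu
  rw [mem_V_iff p n] at hu
  obtain ⟨c, rfl⟩ := hu
  intro h
  have := congrArg (MvPolynomial.coeff (Finsupp.single j 1)) h
  rw [MvPolynomial.coeff_sub, coeff_L] at this
  simp [MvPolynomial.coeff_X] at this

/-- Product over `𝔽_p` of `t - a • c` in a domain. -/
lemma prod_smul_eq {R : Type} [CommRing R] [IsDomain R] [Algebra K R] (c t : R) (hc : c ≠ 0) :
    ∏ a : K, (t - a • c) = t ^ p - c ^ (p - 1) * t := by
  have hp : p.Prime := Fact.out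
  set P : Polynomial R := ∏ a : K, (Polynomial.X - Polynomial.C (a • c)) with hP
  set Q : Polynomial R := Polynomial.X ^ p - Polynomial.C (c ^ (p - 1)) * Polynomial.X with hQ
  have hPm : P.Monic := Polynomial.monic_prod_of_monic _ _ fun u _ => Polynomial.monic_X_sub_C _
  have hPd : P.natDegree = p := by
    rw [hP, Polynomial.natDegree_prod_of_monic _ _ (fun u _ => Polynomial.monic_X_sub_C _)]
    simp [ZMod.card]
  have hQm : Q.Monic := by
    have hQ' : Q = Polynomial.X ^ ((p - 1) + 1) - Polynomial.C (c ^ (p - 1)) * Polynomial.X := by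
      rw [Nat.sub_add_cancel hp.one_le]
    rw [hQ']
    apply Polynomial.monic_X_pow_sub
    calc (Polynomial.C (c ^ (p - 1)) * Polynomial.X).degree
        ≤ 0 + 1 := Polynomial.degree_mul_le _ _ |>.trans
          (add_le_add Polynomial.degree_C_le Polynomial.degree_X_le)
      _ = ((1 : ℕ) : WithBot ℕ) := by norm_num
      _ < ((p - 1 + 1 : ℕ) : WithBot ℕ) := by
          rw [Nat.sub_add_cancel hp.one_le]
          exact_mod_cast hp.one_lt
  have hQd : Q.natDegree = p := by
    have hlt : (Polynomial.C (c ^ (p - 1)) * Polynomial.X).natDegree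
        < (Polynomial.X ^ p : Polynomial R).natDegree := by
      rw [Polynomial.natDegree_X_pow]
      exact lt_of_le_of_lt
        (le_trans (Polynomial.natDegree_C_mul_le _ _) (le_of_eq Polynomial.natDegree_X))
        hp.one_lt
    rw [hQ, Polynomial.natDegree_sub_eq_left_of_natDegree_lt hlt, Polynomial.natDegree_X_pow]
  have hinj : Function.Injective (fun a : K => a • c) := by
    intro a b hab
    simp only at hab
    by_contra hne
    have h1 : (a - b) • c = 0 := by rw [sub_smul, hab, sub_self]
    rw [Algebra.smul_def] at h1
    rcases mul_eq_zero.mp h1 with h | h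
    · exact hne (sub_eq_zero.mp ((algebraMap K R).injective (by rw [h, map_zero])))
    · exact hc h
  have heval : ∀ b : K, Polynomial.eval (b • c) (Q - P) = 0 := by
    intro b
    have hPe : Polynomial.eval (b • c) P = 0 := by
      rw [hP, Polynomial.eval_prod]
      exact Finset.prod_eq_zero (Finset.mem_univ b) (by simp)
    have hQe : Polynomial.eval (b • c) Q = 0 := by
      rw [hQ]
      simp only [Polynomial.eval_sub, Polynomial.eval_pow, Polynomial.eval_X,
        Polynomial.eval_mul, Polynomial.eval_C]
      rw [smul_pow, ZMod.pow_card, mul_smul_comm, pow_sub_one_mul hp.ne_zero, sub_self]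
    rw [Polynomial.eval_sub, hPe, hQe, sub_zero]
  have hQP : Q - P = 0 := by
    by_cases h0 : Q - P = 0
    · exact h0
    apply Polynomial.eq_zero_of_natDegree_lt_card_of_eval_eq_zero (Q - P) hinj heval
    have hcard : Fintype.card K = p := ZMod.card p
    rw [hcard]
    rw [Polynomial.natDegree_lt_iff_degree_lt h0]
    have hdQP : Q.degree = P.degree := by
      rw [Polynomial.degree_eq_natDegree hQm.ne_zero,
        Polynomial.degree_eq_natDegree hPm.ne_zero, hQd, hPd]
    have hlc : Q.leadingCoeff = P.leadingCoeff := by rw [hQm.leadingCoeff, hPm.leadingCoeff]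
    calc (Q - P).degree < Q.degree := Polynomial.degree_sub_lt hdQP hQm.ne_zero hlc
      _ = (p : ℕ) := by rw [Polynomial.degree_eq_natDegree hQm.ne_zero, hQd]
  have hPQ : P = Q := by
    have := sub_eq_zero.mp hQP
    exact this.symm
  have := congrArg (Polynomial.eval t) hPQ
  rw [hP, hQ] at this
  simpa [Polynomial.eval_prod] using this

end Stmt9Aux
namespace Stmt9Aux

variable (p n : ℕ) [Fact p.Prime]

local notation "K" => ZMod p
local notation "S" => MvPolynomial (Fin n) (ZMod p)

lemma coeff_V {j : Fin n} {u : S} (hu : u ∈ V p n j.val) :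
    MvPolynomial.coeff (Finsupp.single j 1) u = 0 := by
  rw [mem_V_iff p n] at hu
  obtain ⟨c, rfl⟩ := hu
  rw [coeff_L]
  simp

lemma coeff_smul_X (a : K) (j : Fin n) :
    MvPolynomial.coeff (Finsupp.single j 1) (a • X j : S) = a := by
  rw [MvPolynomial.coeff_smul]
  simp [MvPolynomial.coeff_X]

lemma L_succ (j : Fin n) (c : Fin n → K) :
    L p n (j.val + 1) c = L p n j.val c + C (c j) * X j := by
  rw [L, L]
  have hfil : Finset.univ.filter (fun x : Fin n => x.val < j.val + 1)
      = insert j (Finset.univ.filter (fun x : Fin n => x.val < j.val)) := by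
    ext x
    simp only [Finset.mem_filter, Finset.mem_univ, true_and, Finset.mem_insert, Fin.ext_iff]
    omega
  rw [hfil, Finset.sum_insert (by simp)]
  ring

lemma f_succ (j : Fin n) :
    f p n (j.val + 1) = (f p n j.val) ^ p - Polynomial.C (hGen p n j) * f p n j.val := by
  classical
  set k := j.val with hk
  set cf : S → K := fun v => MvPolynomial.coeff (Finsupp.single j 1) v with hcf
  have h1 : f p n (k + 1) = ∏ x ∈ (Finset.univ : Finset K) ×ˢ V p n k,
      (Polynomial.X - Polynomial.C (x.2 + x.1 • X j)) := by
    rw [f]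
    apply Finset.prod_nbij' (i := fun v => (cf v, v - cf v • X j))
      (j := fun x => x.2 + x.1 • X j)
    · intro v hv
      rw [mem_V_iff p n] at hv
      obtain ⟨c, rfl⟩ := hv
      rw [Finset.mem_product]
      refine ⟨Finset.mem_univ _, ?_⟩
      have hcfv : cf (L p n (k + 1) c) = c j := by
        show MvPolynomial.coeff (Finsupp.single j 1) (L p n (k + 1) c) = c j
        rw [L_succ p n j c, MvPolynomial.coeff_add, coeff_V p n (by
          rw [mem_V_iff p n]; exact ⟨c, rfl⟩)]
        rw [← MvPolynomial.smul_eq_C_mul, coeff_smul_X]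
        simp
      rw [hcfv, L_succ p n j c, ← MvPolynomial.smul_eq_C_mul, add_sub_cancel_right]
      rw [mem_V_iff p n]; exact ⟨c, rfl⟩
    · rintro ⟨a, u⟩ hau
      rw [Finset.mem_product] at hau
      obtain ⟨-, hu⟩ := hau
      rw [mem_V_iff p n] at hu
      obtain ⟨c, rfl⟩ := hu
      rw [mem_V_iff p n]
      refine ⟨fun x => if x = j then a else c x, ?_⟩
      rw [L_succ]
      simp only [if_pos rfl]
      rw [← MvPolynomial.smul_eq_C_mul]
      congr 1
      apply Finset.sum_congr rfl
      intro x hx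
      simp only [Finset.mem_filter] at hx
      have hxj : x ≠ j := by
        intro h; rw [h] at hx; omega
      simp [hxj]
    · intro v hv
      simp only
      ring
    · rintro ⟨a, u⟩ hau
      rw [Finset.mem_product] at hau
      have hcfa : cf (u + a • X j) = a := by
        show MvPolynomial.coeff (Finsupp.single j 1) (u + a • X j) = a
        rw [MvPolynomial.coeff_add, coeff_V p n hau.2, coeff_smul_X, zero_add]
      simp only [hcfa]
      simp only [add_sub_cancel_right]
    · intro v hv
      simp only
      congr 1
      ring_nf
  rw [h1, Finset.prod_product]
  have h2 : ∀ a : K, ∏ u ∈ V p n k, (Polynomial.X - Polynomial.C (u + a • X j))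
      = f p n k - a • Polynomial.C (Polynomial.eval (X j) (f p n k)) := by
    intro a
    rw [prod_translate p n k (a • X j)]
    have h3 : Polynomial.eval (-(a • X j)) (f p n k)
        = -(a • Polynomial.eval (X j) (f p n k)) := by
      rw [show (-(a • X j) : MvPolynomial (Fin n) K) = (-a) • X j by rw [neg_smul],
        eval_f_smul, neg_smul]
    rw [h3, map_neg, ← Polynomial.smul_C, sub_eq_add_neg]
  rw [Finset.prod_congr rfl (fun a _ => h2 a)]
  have hc : (Polynomial.C (Polynomial.eval (X j) (f p n k)) : Polynomial (MvPolynomial (Fin n) K))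
      ≠ 0 := by
    simpa using eval_X_f_ne_zero p n j
  rw [prod_smul_eq (p := p) _ (f p n k) hc, hGen, ← map_pow]

end Stmt9Aux
namespace Stmt9Aux

variable (p n : ℕ) [Fact p.Prime]

local notation "K" => ZMod p
local notation "S" => MvPolynomial (Fin n) (ZMod p)

lemma coeff_pow_p (g : Polynomial S) (M : ℕ) :
    (g ^ p).coeff M = (if p ∣ M then g.coeff (M / p) else 0) ^ p := by
  have hp : p.Prime := Fact.out
  have h1 := Polynomial.map_frobenius_expand p g
  rw [← h1, Polynomial.coeff_map, Polynomial.coeff_expand hp.pos]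
  rw [frobenius_def]

lemma f_natDegree' {k : ℕ} (hk : k ≤ n) : (f p n k).natDegree = p ^ k := by
  rw [f_natDegree, card_V p n hk]

lemma d_self {k : ℕ} (hk : k ≤ n) : d p n k k = 1 := by
  rw [d, Nat.sub_self, pow_zero, one_mul]
  have h1 : p ^ k = (f p n k).natDegree := (f_natDegree' p n hk).symm
  rw [h1]
  exact (f_monic p n k).coeff_natDegree

lemma neg_one_pow_p : ((-1 : S)) ^ p = -1 := neg_one_pow_char (MvPolynomial (Fin n) (ZMod p)) p

lemma d_rec {j : Fin n} {i : ℕ} (hi1 : 1 ≤ i) (hi2 : i ≤ j.val) :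
    d p n (j.val + 1) i = (d p n j.val (i - 1)) ^ p + hGen p n j * d p n j.val i := by
  have hp : p.Prime := Fact.out
  set k := j.val with hk
  have hco : (f p n (k + 1)).coeff (p ^ i)
      = ((f p n k).coeff (p ^ (i - 1))) ^ p - hGen p n j * (f p n k).coeff (p ^ i) := by
    rw [f_succ p n j, Polynomial.coeff_sub, Polynomial.coeff_C_mul, coeff_pow_p]
    have hdvd : p ∣ p ^ i := dvd_pow_self p (by omega)
    rw [if_pos hdvd]
    congr 2
    have h5 : p ^ i = p ^ (i - 1) * p := by
      rw [← pow_succ]; congr 1; omega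
    rw [h5, Nat.mul_div_cancel _ hp.pos]
  have e1 : k - (i - 1) = k + 1 - i := by omega
  have e2 : k + 1 - i = (k - i) + 1 := by omega
  rw [d, d, d, hco, mul_pow, ← pow_mul, mul_comm (k - (i - 1)) p, pow_mul, neg_one_pow_p,
    e1, e2, pow_succ]
  ring

lemma d_rec0 (j : Fin n) : d p n (j.val + 1) 0 = hGen p n j * d p n j.val 0 := by
  have hp : p.Prime := Fact.out
  have hco : (f p n (j.val + 1)).coeff (p ^ 0)
      = -(hGen p n j * (f p n j.val).coeff (p ^ 0)) := by
    rw [f_succ, Polynomial.coeff_sub, Polynomial.coeff_C_mul, coeff_pow_p, pow_zero,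
      if_neg (by rw [Nat.dvd_one]; exact hp.ne_one), zero_pow hp.ne_zero, zero_sub]
  rw [d, d, hco, Nat.sub_zero, Nat.sub_zero, pow_succ]
  ring

end Stmt9Aux
namespace Stmt9Aux

open scoped Classical

variable (p n : ℕ) [Fact p.Prime]

local notation "K" => ZMod p
local notation "S" => MvPolynomial (Fin n) (ZMod p)

lemma sm_add {i : ℕ} {j : Fin i → Fin n} (h : StrictMono j) :
    ∀ s t : Fin i, s.val ≤ t.val → (j s).val + (t.val - s.val) ≤ (j t).val := by
  suffices H : ∀ dd : ℕ, ∀ s t : Fin i, t.val = s.val + dd → (j s).val + dd ≤ (j t).val by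
    intro s t hst
    have := H (t.val - s.val) s t (by omega)
    omega
  intro dd
  induction dd with
  | zero =>
    intro s t h0
    have hst : s = t := Fin.ext (by omega)
    rw [hst]
    omega
  | succ m ih =>
    intro s t h0
    have htm : s.val + m < i := by have := t.isLt; omega
    have h1 := ih s ⟨s.val + m, htm⟩ rfl
    have h2 : (⟨s.val + m, htm⟩ : Fin i) < t := by rw [Fin.lt_def]; simp; omega
    have h3 := h h2
    rw [Fin.lt_def] at h3
    omega

lemma sm_bound {i b : ℕ} {j : Fin i → Fin n} (h : StrictMono j)
    (hb : ∀ t, (j t).val < b) (s : Fin i) : (j s).val ≤ b - i + s.val := by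
  have hi : 0 < i := s.pos
  have h1 := sm_add (n := n) h s ⟨i - 1, by omega⟩ (by simp; omega)
  have h2 := hb ⟨i - 1, by omega⟩
  simp only at h1 h2
  omega

lemma sm_le_k {i b : ℕ} {j : Fin i → Fin n} (h : StrictMono j)
    (hb : ∀ t, (j t).val < b) (hi : 0 < i) : i ≤ b := by
  have h1 := sm_add (n := n) h ⟨0, hi⟩ ⟨i - 1, by omega⟩ (by simp)
  have h2 := hb ⟨i - 1, by omega⟩
  simp only at h1 h2
  omega

lemma snoc_strictMono {m : ℕ} {j' : Fin m → Fin n} (h : StrictMono j')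
    {a : Fin n} (ha : ∀ t, j' t < a) : StrictMono (Fin.snoc j' a) := by
  intro s1 s2 hlt
  have hs1 : s1 ≠ Fin.last m := by
    intro he
    rw [he] at hlt
    exact absurd hlt (Fin.le_last s2).not_gt
  obtain ⟨t1, rfl⟩ := Fin.exists_castSucc_eq.mpr hs1
  rw [Fin.snoc_castSucc]
  rcases eq_or_ne s2 (Fin.last m) with rfl | hs2
  · rw [Fin.snoc_last]; exact ha t1
  · obtain ⟨t2, rfl⟩ := Fin.exists_castSucc_eq.mpr hs2
    rw [Fin.snoc_castSucc]
    exact h (Fin.castSucc_lt_castSucc_iff.mp hlt)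

end Stmt9Aux
namespace Stmt9Aux

open scoped Classical

variable (p n : ℕ) [Fact p.Prime]

local notation "K" => ZMod p
local notation "S" => MvPolynomial (Fin n) (ZMod p)

lemma comb (k m : ℕ) (j₀ : Fin n) (hj₀v : j₀.val = k) :
    ∑ j ∈ Finset.univ.filter
        (fun j : Fin (m+1) → Fin n => StrictMono j ∧ ∀ s, (j s).val < k + 1),
      ∏ s, hGen p n (j s) ^ p ^ (k + 1 - (m+1) + s.val - (j s).val)
    = (∑ j ∈ Finset.univ.filter
        (fun j : Fin (m+1) → Fin n => StrictMono j ∧ ∀ s, (j s).val < k),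
      ∏ s, hGen p n (j s) ^ p ^ (k - (m+1) + s.val - (j s).val)) ^ p
    + hGen p n j₀ *
      ∑ j ∈ Finset.univ.filter
        (fun j : Fin m → Fin n => StrictMono j ∧ ∀ s, (j s).val < k),
      ∏ s, hGen p n (j s) ^ p ^ (k - m + s.val - (j s).val) := by
  have hlm : (Fin.last m).val = m := rfl
  rw [← Finset.sum_filter_add_sum_filter_not
    (Finset.univ.filter (fun j : Fin (m+1) → Fin n => StrictMono j ∧ ∀ s, (j s).val < k + 1))
    (fun j => (j (Fin.last m)).val < k)]
  congr 1
  · -- first sums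
    have hA : (Finset.univ.filter
          (fun j : Fin (m+1) → Fin n => StrictMono j ∧ ∀ s, (j s).val < k + 1)).filter
          (fun j => (j (Fin.last m)).val < k)
        = Finset.univ.filter (fun j : Fin (m+1) → Fin n => StrictMono j ∧ ∀ s, (j s).val < k) := by
      rw [Finset.filter_filter]
      apply Finset.filter_congr
      intro j _
      constructor
      · rintro ⟨⟨hsm, _⟩, hlast⟩
        refine ⟨hsm, fun s => ?_⟩
        have h1 : j s ≤ j (Fin.last m) := hsm.monotone (Fin.le_last s)
        rw [Fin.le_def] at h1
        omega
      · rintro ⟨hsm, hlt⟩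
        exact ⟨⟨hsm, fun s => by have := hlt s; omega⟩, hlt (Fin.last m)⟩
    rw [hA, sum_pow_char]
    apply Finset.sum_congr rfl
    intro j hj
    simp only [Finset.mem_filter] at hj
    obtain ⟨-, hsm, hlt⟩ := hj
    rw [← Finset.prod_pow]
    apply Finset.prod_congr rfl
    intro s _
    rw [← pow_mul, ← pow_succ]
    have hb := sm_bound (n := n) hsm hlt s
    have hmk : m + 1 ≤ k := sm_le_k (n := n) hsm hlt (by omega)
    have hexp : k - (m+1) + s.val - (j s).val + 1 = k + 1 - (m+1) + s.val - (j s).val := by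
      omega
    rw [hexp]
  · -- second sums
    rw [Finset.mul_sum]
    apply Finset.sum_nbij' (i := fun j (t : Fin m) => j t.castSucc)
      (j := fun j' => Fin.snoc j' j₀)
    · intro j hj
      simp only [Finset.mem_filter, not_lt] at hj ⊢
      obtain ⟨⟨-, hsm, hlt⟩, hge⟩ := hj
      have hlast : (j (Fin.last m)).val = k := by have := hlt (Fin.last m); omega
      refine ⟨Finset.mem_univ _, fun a b hab => hsm (Fin.castSucc_lt_castSucc_iff.mpr hab),
        fun t => ?_⟩
      have h1 : j t.castSucc < j (Fin.last m) := hsm (Fin.castSucc_lt_last t)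
      rw [Fin.lt_def] at h1
      omega
    · intro j' hj'
      simp only [Finset.mem_filter, not_lt] at hj' ⊢
      obtain ⟨-, hsm, hlt⟩ := hj'
      have hja : ∀ t, j' t < j₀ := by
        intro t
        rw [Fin.lt_def]
        have := hlt t
        omega
      refine ⟨⟨Finset.mem_univ _, snoc_strictMono (n := n) hsm hja, fun s => ?_⟩, ?_⟩
      · induction s using Fin.lastCases with
        | last => rw [Fin.snoc_last]; omega
        | cast t => rw [Fin.snoc_castSucc]; have := hlt t; omega
      · rw [Fin.snoc_last]; omega
    · intro j hj
      simp only [Finset.mem_filter, not_lt] at hj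
      obtain ⟨⟨-, hsm, hlt⟩, hge⟩ := hj
      have hlast : j (Fin.last m) = j₀ := by
        have := hlt (Fin.last m)
        apply Fin.ext
        omega
      funext s
      induction s using Fin.lastCases with
      | last => rw [Fin.snoc_last, hlast]
      | cast t => rw [Fin.snoc_castSucc]
    · intro j' hj'
      funext t
      simp only [Fin.snoc_castSucc]
    · intro j hj
      simp only [Finset.mem_filter, not_lt] at hj
      obtain ⟨⟨-, hsm, hlt⟩, hge⟩ := hj
      have hlast : (j (Fin.last m)).val = k := by have := hlt (Fin.last m); omega
      have hkm : m ≤ k := by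
        have h1 := sm_add (n := n) hsm 0 (Fin.last m) (by simp)
        simp only [Fin.val_zero, hlm, Nat.sub_zero] at h1
        omega
      rw [Fin.prod_univ_castSucc]
      have hexp : k + 1 - (m+1) + (Fin.last m).val - (j (Fin.last m)).val = 0 := by
        omega
      rw [hexp, pow_zero, pow_one]
      have hj₀eq : j (Fin.last m) = j₀ := Fin.ext (by omega)
      rw [hj₀eq, mul_comm]
      congr 1
      apply Finset.prod_congr rfl
      intro t _
      simp only [Fin.coe_castSucc]
      have he : k + 1 - (m + 1) + t.val - (j t.castSucc).val
          = k - m + t.val - (j t.castSucc).val := by omega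
      rw [he]

end Stmt9Aux
namespace Stmt9Aux

open scoped Classical

variable (p n : ℕ) [Fact p.Prime]

local notation "K" => ZMod p
local notation "S" => MvPolynomial (Fin n) (ZMod p)

lemma filter_empty_of_big {i : ℕ} (k : ℕ) (hki : k < i) :
    Finset.univ.filter (fun j : Fin i → Fin n => StrictMono j ∧ ∀ s, (j s).val < k) = ∅ := by
  rw [Finset.filter_eq_empty_iff]
  rintro j - ⟨hsm, hlt⟩
  have := sm_le_k (n := n) hsm hlt (by omega)
  omega

lemma base_sum (k : ℕ) :
    ∑ j ∈ Finset.univ.filter (fun j : Fin 0 → Fin n => StrictMono j ∧ ∀ s, (j s).val < k),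
      ∏ s : Fin 0, hGen p n (j s) ^ p ^ (k - 0 + s.val - (j s).val) = 1 := by
  rw [Finset.filter_true_of_mem (fun j _ => ⟨fun a b h => a.elim0, fun s => s.elim0⟩)]
  simp

lemma main_aux (k : ℕ) : k ≤ n → ∀ i, i ≤ k →
    d p n k (k - i) =
      ∑ j ∈ Finset.univ.filter
          (fun j : Fin i → Fin n => StrictMono j ∧ ∀ s, (j s).val < k),
        ∏ s : Fin i, hGen p n (j s) ^ p ^ (k - i + s.val - (j s).val) := by
  induction k with
  | zero =>
    intro _ i hi
    have h0 : i = 0 := by omega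
    subst h0
    simp only [Nat.sub_self, Nat.sub_zero]
    rw [d_self p n (Nat.zero_le n)]
    exact (base_sum p n 0).symm
  | succ k ih =>
    intro hk i hi
    rcases Nat.eq_zero_or_pos i with rfl | hipos
    · simp only [Nat.sub_zero]
      rw [d_self p n hk]
      exact (base_sum p n (k + 1)).symm
    obtain ⟨m, rfl⟩ : ∃ m, i = m + 1 := ⟨i - 1, by omega⟩
    have hkn : k ≤ n := by omega
    set j₀ : Fin n := ⟨k, by omega⟩ with hj₀def
    have hj₀v : j₀.val = k := rfl
    rw [comb p n k m j₀ hj₀v]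
    rcases Nat.lt_or_ge m k with hmk | hmk
    · have hrec := d_rec p n (j := j₀) (i := k - m) (by omega) (by rw [hj₀v]; omega)
      rw [hj₀v] at hrec
      have e0 : k + 1 - (m + 1) = k - m := by omega
      rw [e0, hrec]
      have e1 : k - m - 1 = k - (m + 1) := by omega
      rw [e1, ih hkn (m + 1) (by omega), ih hkn m (by omega)]
    · have hm : m = k := by omega
      subst hm
      rw [show m + 1 - (m + 1) = 0 from by omega]
      have hrec := d_rec0 p n j₀
      rw [hj₀v] at hrec
      rw [hrec]
      rw [filter_empty_of_big (n := n) (i := m + 1) (k := m) (by omega), Finset.sum_empty,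
        zero_pow (Fact.out : p.Prime).ne_zero, zero_add]
      congr 1
      rw [show (0 : ℕ) = m - m from by omega]
      exact ih hkn m le_rfl

end Stmt9Aux

open scoped Classical in
/-- `d_{n,n-i} = ∑_{1 ≤ j_1 < ⋯ < j_i ≤ n} ∏_{s=1}^i h_{j_s}^{p^{n-i+s-j_s}}`. -/
theorem stmt9 (p n : ℕ) [Fact p.Prime] (i : ℕ) (hi1 : 1 ≤ i) (hi2 : i ≤ n) :
    d p n n (n - i) =
      ∑ j ∈ Finset.univ.filter (fun j : Fin i → Fin n => StrictMono j),
        ∏ s : Fin i, hGen p n (j s) ^ p ^ (n - i + s.val - (j s).val) := by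
  rw [Stmt9Aux.main_aux p n n le_rfl i hi2]
  apply Finset.sum_congr
  · apply Finset.filter_congr
    intro j _
    exact ⟨fun h => h.1, fun h => ⟨h, fun s => (j s).isLt⟩⟩
  · intro x _; rfl
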